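/- The linear map φ from the truncated Witt algebra W_n to gl(n,ℂ) defined by φ(e_1) = ∑_{k=1}^{n-2} E_{k,k+1}, φ(e_2) = ∑_{k=1}^{n-3} (1/(n-k)) E_{k,k+2} + E_{n-1,n}, and φ(e_i) = (1/(i-2)!)·(∑_{k=1}^{n-i-1} (∑_{s=0}^{i-2} (-1)^{i+s} C(i-2,s)/(n-k-s)) E_{k,k+i} + E_{n+1-i,n}) for 3 ≤ i ≤ n, is an injective Lie algebra homomorphism. -/

import Mathlib

noncomputable def Ssum (m : ℕ) (x : ℂ) : ℂ :=
  ∑ s ∈ Finset.range (m+1), (-1:ℂ)^s * (m.choose s : ℂ) / (x - (s:ℂ))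

lemma Ssum_succ (m : ℕ) (x : ℂ) : Ssum (m+1) x = Ssum m x - Ssum m (x-1) := by
  unfold Ssum
  rw [Finset.sum_range_succ' (fun s => (-1:ℂ)^s * ((m+1).choose s : ℂ) / (x - (s:ℂ)))]
  rw [Finset.sum_range_succ' (fun s => (-1:ℂ)^s * (m.choose s : ℂ) / (x - (s:ℂ)))]
  have h1 : ∀ s ∈ Finset.range (m+1),
      (-1:ℂ)^(s+1) * ((m+1).choose (s+1) : ℂ) / (x - ((s+1:ℕ):ℂ))
      = -((-1:ℂ)^s * (m.choose s : ℂ) / ((x-1) - (s:ℂ)))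
        + (-((-1:ℂ)^s * (m.choose (s+1) : ℂ) / (x - ((s+1:ℕ):ℂ)))) := by
    intro s _
    rw [Nat.choose_succ_succ]
    push_cast
    rw [pow_succ]
    field_simp
    ring
  rw [Finset.sum_congr rfl h1, Finset.sum_add_distrib]
  have h2 : ∑ s ∈ Finset.range (m+1), (-((-1:ℂ)^s * (m.choose (s+1) : ℂ) / (x - ((s+1:ℕ):ℂ))))
      = ∑ s ∈ Finset.range m, (-((-1:ℂ)^s * (m.choose (s+1) : ℂ) / (x - ((s+1:ℕ):ℂ)))) := by
    rw [Finset.sum_range_succ, Nat.choose_succ_self]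
    simp
  rw [h2]
  have h4 : ∑ s ∈ Finset.range m, (-1:ℂ)^(s+1) * (m.choose (s+1) : ℂ) / (x - ((s+1:ℕ):ℂ))
      = ∑ s ∈ Finset.range m, (-((-1:ℂ)^s * (m.choose (s+1) : ℂ) / (x - ((s+1:ℕ):ℂ)))) := by
    apply Finset.sum_congr rfl
    intro s _
    rw [pow_succ]; ring
  rw [← h4]
  simp only [Nat.choose_zero_right, Nat.cast_zero, Nat.cast_one, pow_zero, one_mul, sub_zero]
  rw [Finset.sum_neg_distrib]
  ring

lemma factorial_cast_ne (k : ℕ) : (k.factorial : ℂ) ≠ 0 :=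
  Nat.cast_ne_zero.2 (Nat.factorial_ne_zero k)

lemma Ssum_eq (m : ℕ) : ∀ b : ℕ, m < b →
    Ssum m (b:ℂ) = (-1:ℂ)^m * (m.factorial:ℂ) * ((b-m-1).factorial : ℂ) / (b.factorial : ℂ) := by
  induction m with
  | zero =>
    intro b hb
    obtain ⟨c, rfl⟩ : ∃ c, b = c + 1 := ⟨b-1, by omega⟩
    unfold Ssum
    simp only [zero_add, Nat.factorial_zero, Finset.sum_range_one, Nat.choose_self, Nat.cast_zero, sub_zero, pow_zero,
      one_mul, Nat.cast_one]
    have h1 : ((c+1).factorial : ℂ) = (c+1) * (c.factorial : ℂ) := by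
      rw [Nat.factorial_succ]; push_cast; ring
    have e1 : c + 1 - 0 - 1 = c := by omega
    rw [e1, h1]
    have h3 : ((c:ℂ)+1) ≠ 0 := by
      have : ((c:ℂ)+1) = ((c+1 : ℕ) : ℂ) := by push_cast; ring
      rw [this]; exact Nat.cast_ne_zero.2 (by omega)
    have h2 := factorial_cast_ne c
    push_cast
    field_simp
  | succ m ih =>
    intro b hb
    rw [Ssum_succ]
    have hb1 : 1 ≤ b := by omega
    have hc : ((b:ℂ) - 1) = ((b-1 : ℕ) : ℂ) := by push_cast [hb1]; ring
    rw [hc, ih b (by omega), ih (b-1) (by omega)]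
    obtain ⟨c, rfl⟩ : ∃ c, b = m + 2 + c := ⟨b - m - 2, by omega⟩
    have e1 : m + 2 + c - m - 1 = c + 1 := by omega
    have e2 : m + 2 + c - 1 = m + 1 + c := by omega
    have e3 : m + 1 + c - m - 1 = c := by omega
    have e4 : m + 2 + c - (m+1) - 1 = c := by omega
    rw [e1, e2, e3, e4]
    have f1 : ((m+2+c).factorial : ℂ) = (m+2+c) * ((m+1+c).factorial : ℂ) := by
      rw [show m+2+c = (m+1+c)+1 by ring, Nat.factorial_succ]; push_cast; ring
    have f2 : ((c+1).factorial : ℂ) = (c+1) * (c.factorial : ℂ) := by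
      rw [Nat.factorial_succ]; push_cast; ring
    have f3 : ((m+1).factorial : ℂ) = (m+1) * (m.factorial : ℂ) := by
      rw [Nat.factorial_succ]; push_cast; ring
    rw [f1, f2, f3]
    have nz1 : ((m:ℂ)+2+c) ≠ 0 := by
      have : ((m:ℂ)+2+c) = ((m+2+c : ℕ) : ℂ) := by push_cast; ring
      rw [this]; exact Nat.cast_ne_zero.2 (by omega)
    have := factorial_cast_ne (m+1+c)
    have := factorial_cast_ne c
    have := factorial_cast_ne m
    push_cast
    field_simp
    ring

/-- Structure constants of the truncated Witt algebra `W_n`: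
`[e_i,e_j] = (j-i) e_{i+j}` when `i+j ≤ n`, and `0` otherwise. -/
noncomputable def cW (n i j k : ℕ) : ℂ :=
  if i + j ≤ n ∧ k = i + j then (j : ℂ) - (i : ℂ) else 0
/-- The elementary `N × N` matrix with `1` in (1-based) position `(i,j)`. -/
noncomputable def elemMat (N : ℕ) (i j : ℕ) : Matrix (Fin N) (Fin N) ℂ :=
  Matrix.of fun a b => if (a : ℕ) + 1 = i ∧ (b : ℕ) + 1 = j then 1 else 0

/-- The matrices representing the basis of the truncated Witt algebra `W_n`:
`φ(e_1) = ∑_{k=1}^{n-2} E_{k,k+1}`,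
`φ(e_2) = ∑_{k=1}^{n-3} (1/(n-k)) E_{k,k+2} + E_{n-1,n}`,
`φ(e_i) = (1/(i-2)!) (∑_{k=1}^{n-i-1} (∑_{s=0}^{i-2} (-1)^{i+s} C(i-2,s)/(n-k-s)) E_{k,k+i}
          + E_{n+1-i,n})` for `3 ≤ i ≤ n`. -/
noncomputable def MW (n i : ℕ) : Matrix (Fin n) (Fin n) ℂ :=
  if i = 1 then ∑ k ∈ Finset.Icc 1 (n - 2), elemMat n k (k + 1)
  else if i = 2 then
    (∑ k ∈ Finset.Icc 1 (n - 3), ((1 : ℂ) / ((n : ℂ) - (k : ℂ))) • elemMat n k (k + 2))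
      + elemMat n (n - 1) n
  else ((1 : ℂ) / ((i - 2).factorial : ℂ)) •
    ((∑ k ∈ Finset.Icc 1 (n - i - 1),
        (∑ s ∈ Finset.range (i - 1),
          (-1 : ℂ) ^ (i + s) * ((i - 2).choose s : ℂ) / ((n : ℂ) - (k : ℂ) - (s : ℂ)))
          • elemMat n k (k + i))
      + elemMat n (n + 1 - i) n)

noncomputable def G (n i a : ℕ) : ℂ :=
  ((n - a - i).factorial : ℂ) / ((n - a - 1).factorial : ℂ)

noncomputable def Ent (n i a b : ℕ) : ℂ :=
  (if b = a + i ∧ a + i + 2 ≤ n then G n i a else 0)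
  + (if 2 ≤ i ∧ a + i = n ∧ b + 2 = n + 1 then (1 : ℂ) / ((i-2).factorial : ℂ) else 0)

lemma sum_elem_apply (n lo hi : ℕ) (c : ℕ → ℂ) (d : ℕ → ℕ) (a b : Fin n) :
    (∑ k ∈ Finset.Icc lo hi, c k • elemMat n k (d k)) a b =
      if lo ≤ (a:ℕ)+1 ∧ (a:ℕ)+1 ≤ hi ∧ (b:ℕ)+1 = d ((a:ℕ)+1) then c ((a:ℕ)+1) else 0 := by
  rw [Matrix.sum_apply]
  simp only [Matrix.smul_apply, elemMat, Matrix.of_apply, smul_eq_mul, mul_ite, mul_one, mul_zero]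
  by_cases hm : (a:ℕ)+1 ∈ Finset.Icc lo hi
  · rw [Finset.sum_eq_single_of_mem _ hm]
    · simp only [Finset.mem_Icc] at hm
      split_ifs with p q q <;> first | rfl | omega | (exfalso; exact p.2 q.2.2) |
        (exfalso; exact q ⟨rfl, p.2.2⟩)
    · intro k _ hk
      rw [if_neg]
      intro h
      exact hk h.1.symm
  · rw [Finset.sum_eq_zero, if_neg]
    · simp only [Finset.mem_Icc] at hm
      omega
    · intro k hks
      rw [if_neg]
      intro h
      rw [← h.1] at hks
      exact hm hks

lemma elem_apply (n u v : ℕ) (a b : Fin n) :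
    elemMat n u v a b = if (a:ℕ)+1 = u ∧ (b:ℕ)+1 = v then 1 else 0 := rfl

lemma sum_ind (n v : ℕ) (f : ℕ → ℂ) :
    (∑ m : Fin n, if (m:ℕ) = v then f (m:ℕ) else 0) = if v < n then f v else 0 := by
  split_ifs with h
  · rw [Finset.sum_eq_single_of_mem (⟨v, h⟩ : Fin n) (Finset.mem_univ _)]
    · simp
    · intro m _ hm
      rw [if_neg]
      intro he
      exact hm (Fin.ext he)
  · apply Finset.sum_eq_zero
    intro m _
    rw [if_neg]
    intro hm
    exact h (hm ▸ m.isLt)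

lemma coeff_eq (n i a : ℕ) (hi : 3 ≤ i) (h : a + i + 2 ≤ n) :
    ∑ s ∈ Finset.range (i-1), (-1:ℂ)^(i+s) * ((i-2).choose s : ℂ)
        / ((n:ℂ) - ((a+1 : ℕ):ℂ) - (s:ℂ))
      = ((i-2).factorial : ℂ) * G n i a := by
  obtain ⟨m, rfl⟩ : ∃ m, i = m + 2 := ⟨i - 2, by omega⟩
  have e0 : m + 2 - 1 = m + 1 := by omega
  have e1 : m + 2 - 2 = m := by omega
  rw [e0, e1]
  have hterm : ∀ s ∈ Finset.range (m+1),
      (-1:ℂ)^(m+2+s) * ((m).choose s : ℂ) / ((n:ℂ) - ((a+1 : ℕ):ℂ) - (s:ℂ))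
      = (-1:ℂ)^m * ((-1:ℂ)^s * ((m).choose s : ℂ) / (((n-a-1 : ℕ):ℂ) - (s:ℂ))) := by
    intro s _
    have hc : ((n-a-1 : ℕ):ℂ) = (n:ℂ) - ((a+1 : ℕ):ℂ) := by
      rw [show n - a - 1 = n - (a+1) by omega, Nat.cast_sub (by omega)]
    rw [hc, show m+2+s = (m+s)+2 by ring, pow_add, pow_add]
    ring_nf
  rw [Finset.sum_congr rfl hterm, ← Finset.mul_sum]
  have hS : ∑ s ∈ Finset.range (m+1), (-1:ℂ)^s * ((m).choose s : ℂ) / (((n-a-1 : ℕ):ℂ) - (s:ℂ))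
      = Ssum m ((n-a-1 : ℕ):ℂ) := rfl
  rw [hS, Ssum_eq m (n-a-1) (by omega)]
  have e2 : n - a - 1 - m - 1 = n - a - (m+2) := by omega
  rw [e2]
  unfold G
  have : (-1:ℂ)^m * ((-1:ℂ)^m * (m.factorial:ℂ) * ((n-a-(m+2)).factorial : ℂ)
      / ((n-a-1).factorial : ℂ))
      = ((-1:ℂ)^m * (-1:ℂ)^m) * ((m.factorial:ℂ) * (((n-a-(m+2)).factorial : ℂ)
      / ((n-a-1).factorial : ℂ))) := by ring
  rw [this, ← pow_add, Even.neg_one_pow ⟨m, rfl⟩, one_mul]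

lemma MW_apply (n i : ℕ) (hi : 1 ≤ i) (hin : i ≤ n) (a b : Fin n) :
    MW n i a b = Ent n i (a:ℕ) (b:ℕ) := by
  have ha := a.isLt
  have hb := b.isLt
  unfold MW Ent
  by_cases hi1 : i = 1
  · subst hi1
    rw [if_pos rfl]
    have hrw : (∑ k ∈ Finset.Icc 1 (n - 2), elemMat n k (k + 1))
        = ∑ k ∈ Finset.Icc 1 (n - 2), (fun _ : ℕ => (1:ℂ)) k • elemMat n k (k + 1) := by
      simp
    rw [hrw, sum_elem_apply]
    have hG : G n 1 (a:ℕ) = 1 := by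
      unfold G
      rw [div_self (factorial_cast_ne _)]
    split_ifs with p q r q <;> first | omega | simp [hG] | rfl
  · by_cases hi2 : i = 2
    · subst hi2
      rw [if_neg (by omega), if_pos rfl, Matrix.add_apply, sum_elem_apply, elem_apply]
      have hG : (a:ℕ) + 4 ≤ n → (1:ℂ) / ((n:ℂ) - (((a:ℕ)+1 : ℕ):ℂ)) = G n 2 (a:ℕ) := by
        intro hc
        unfold G
        have key : ((n - (a:ℕ) - 1).factorial : ℂ)
            = ((n:ℂ) - (((a:ℕ)+1 : ℕ):ℂ)) * ((n - (a:ℕ) - 2).factorial : ℂ) := by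
          rw [show n - (a:ℕ) - 1 = (n - (a:ℕ) - 2) + 1 by omega, Nat.factorial_succ,
            Nat.cast_mul]
          congr 1
          rw [show n - (a:ℕ) - 2 + 1 = n - ((a:ℕ)+1) by omega, Nat.cast_sub (by omega)]
        rw [key, mul_comm, ← div_div, div_self (factorial_cast_ne _)]
      by_cases hC : (b:ℕ) = (a:ℕ) + 2 ∧ (a:ℕ) + 2 + 2 ≤ n
      · rw [if_pos (show 1 ≤ (a:ℕ)+1 ∧ (a:ℕ)+1 ≤ n-3 ∧ (b:ℕ)+1 = (a:ℕ)+1+2 by omega),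
          if_neg (show ¬((a:ℕ)+1 = n-1 ∧ (b:ℕ)+1 = n) by omega),
          if_pos hC, if_neg (show ¬(2 ≤ 2 ∧ (a:ℕ)+2 = n ∧ (b:ℕ)+2 = n+1) by omega)]
        rw [add_zero, add_zero]
        exact hG (by omega)
      · by_cases hD : (a:ℕ) + 2 = n ∧ (b:ℕ) + 2 = n + 1
        · rw [if_neg (by omega), if_pos (show (a:ℕ)+1 = n-1 ∧ (b:ℕ)+1 = n by omega),
            if_neg hC, if_pos (show 2 ≤ 2 ∧ (a:ℕ)+2 = n ∧ (b:ℕ)+2 = n+1 by omega)]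
          norm_num [Nat.factorial]
        · rw [if_neg (by omega), if_neg (by omega), if_neg hC,
            if_neg (show ¬(2 ≤ 2 ∧ (a:ℕ)+2 = n ∧ (b:ℕ)+2 = n+1) by omega)]
    · -- 3 ≤ i
      have h3 : 3 ≤ i := by omega
      rw [if_neg hi1, if_neg hi2, Matrix.smul_apply, Matrix.add_apply,
        sum_elem_apply, elem_apply, smul_eq_mul]
      by_cases hC : (b:ℕ) = (a:ℕ) + i ∧ (a:ℕ) + i + 2 ≤ n
      · rw [if_pos (show 1 ≤ (a:ℕ)+1 ∧ (a:ℕ)+1 ≤ n-i-1 ∧ (b:ℕ)+1 = (a:ℕ)+1+i by omega),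
          if_neg (show ¬((a:ℕ)+1 = n+1-i ∧ (b:ℕ)+1 = n) by omega),
          if_pos hC, if_neg (show ¬(2 ≤ i ∧ (a:ℕ)+i = n ∧ (b:ℕ)+2 = n+1) by omega)]
        rw [coeff_eq n i (a:ℕ) (by omega) hC.2, add_zero, add_zero, one_div,
          inv_mul_cancel_left₀ (factorial_cast_ne _)]
      · by_cases hD : (a:ℕ) + i = n ∧ (b:ℕ) + 2 = n + 1
        · rw [if_neg (by omega), if_pos (show (a:ℕ)+1 = n+1-i ∧ (b:ℕ)+1 = n by omega),
            if_neg hC, if_pos (show 2 ≤ i ∧ (a:ℕ)+i = n ∧ (b:ℕ)+2 = n+1 by omega)]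
          ring
        · rw [if_neg (by omega), if_neg (by omega), if_neg hC,
            if_neg (show ¬(2 ≤ i ∧ (a:ℕ)+i = n ∧ (b:ℕ)+2 = n+1) by omega)]
          ring

lemma Ent_decomp (n i a m : ℕ) (hn : 1 ≤ n) :
    Ent n i a m = (if m = a + i then (if a+i+2 ≤ n then G n i a else 0) else 0)
      + (if m = n - 1 then (if 2 ≤ i ∧ a + i = n then (1:ℂ)/((i-2).factorial : ℂ) else 0)
          else 0) := by
  unfold Ent
  congr 1
  · split_ifs with p q r <;> first | rfl | omega | (exfalso; exact q ⟨p.1, p.2⟩) | simp_all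
  · split_ifs with p q r <;> first | rfl | omega

lemma MW_mul_apply (n i j : ℕ) (hn : 1 ≤ n) (hi : 1 ≤ i) (hin : i ≤ n)
    (hj : 1 ≤ j) (hjn : j ≤ n) (a b : Fin n) :
    (MW n i * MW n j) a b
      = if (a:ℕ)+i+2 ≤ n then G n i (a:ℕ) * Ent n j ((a:ℕ)+i) (b:ℕ) else 0 := by
  rw [Matrix.mul_apply]
  have hterm : ∀ m : Fin n, MW n i a m * MW n j m b
      = (if (m:ℕ) = (a:ℕ) + i
          then (fun w => (if (a:ℕ)+i+2 ≤ n then G n i (a:ℕ) else 0) * Ent n j w (b:ℕ)) (m:ℕ)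
          else 0)
        + (if (m:ℕ) = n - 1
            then (fun w => (if 2 ≤ i ∧ (a:ℕ) + i = n then (1:ℂ)/((i-2).factorial : ℂ) else 0)
              * Ent n j w (b:ℕ)) (m:ℕ)
            else 0) := by
    intro m
    rw [MW_apply n i hi hin, MW_apply n j hj hjn, Ent_decomp n i (a:ℕ) (m:ℕ) hn, add_mul]
    simp only [ite_mul, zero_mul]
  rw [Finset.sum_congr rfl (fun m _ => hterm m), Finset.sum_add_distrib,
    sum_ind n ((a:ℕ)+i) (fun w => (if (a:ℕ)+i+2 ≤ n then G n i (a:ℕ) else 0) * Ent n j w (b:ℕ)),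
    sum_ind n (n-1) (fun w => (if 2 ≤ i ∧ (a:ℕ) + i = n then (1:ℂ)/((i-2).factorial : ℂ) else 0)
      * Ent n j w (b:ℕ))]
  have hz : Ent n j (n-1) (b:ℕ) = 0 := by
    unfold Ent
    rw [if_neg (by omega), if_neg (by omega), add_zero]
  rw [hz, mul_zero, ite_self, add_zero]
  split_ifs with p q q
  · rfl
  · rw [zero_mul]
  · omega
  · rfl

lemma keyG (n i j a : ℕ) (hi : 1 ≤ i) (hj : 1 ≤ j) (h : a + i + j + 2 ≤ n) :
    G n i a * G n j (a+i) - G n j a * G n i (a+j) = ((j:ℂ) - (i:ℂ)) * G n (i+j) a := by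
  obtain ⟨i', rfl⟩ : ∃ i', i = i' + 1 := ⟨i-1, by omega⟩
  obtain ⟨j', rfl⟩ : ∃ j', j = j' + 1 := ⟨j-1, by omega⟩
  obtain ⟨q, rfl⟩ : ∃ q, n = a + i' + j' + 4 + q := ⟨n - (a+i'+j'+4), by omega⟩
  unfold G
  rw [show a + i' + j' + 4 + q - a - (i'+1) = j' + q + 3 by omega,
    show a + i' + j' + 4 + q - a - 1 = i' + j' + q + 3 by omega,
    show a + i' + j' + 4 + q - (a + (i'+1)) - (j'+1) = q + 2 by omega,
    show a + i' + j' + 4 + q - (a + (i'+1)) - 1 = j' + q + 2 by omega,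
    show a + i' + j' + 4 + q - a - (j'+1) = i' + q + 3 by omega,
    show a + i' + j' + 4 + q - (a + (j'+1)) - (i'+1) = q + 2 by omega,
    show a + i' + j' + 4 + q - (a + (j'+1)) - 1 = i' + q + 2 by omega,
    show a + i' + j' + 4 + q - a - (i' + 1 + (j' + 1)) = q + 2 by omega]
  rw [show j' + q + 3 = (j' + q + 2) + 1 by omega, Nat.factorial_succ (j'+q+2),
    show i' + q + 3 = (i' + q + 2) + 1 by omega, Nat.factorial_succ (i'+q+2)]
  push_cast
  have n1 := factorial_cast_ne (i'+j'+q+3)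
  have n2 := factorial_cast_ne (j'+q+2)
  have n3 := factorial_cast_ne (i'+q+2)
  have n4 := factorial_cast_ne (q+2)
  field_simp
  ring

lemma keyE2 (n i j a b : ℕ) (hi : 2 ≤ i) (hj : 2 ≤ j) (hB : a + i + j = n) :
    G n i a * ((1:ℂ)/((j-2).factorial : ℂ)) - G n j a * ((1:ℂ)/((i-2).factorial : ℂ))
      = ((j:ℂ) - (i:ℂ)) * ((1:ℂ)/((i+j-2).factorial : ℂ)) := by
  obtain ⟨i', rfl⟩ : ∃ i', i = i' + 2 := ⟨i-2, by omega⟩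
  obtain ⟨j', rfl⟩ : ∃ j', j = j' + 2 := ⟨j-2, by omega⟩
  subst hB
  unfold G
  rw [show a + (i'+2) + (j'+2) - a - (i'+2) = j' + 2 by omega,
    show a + (i'+2) + (j'+2) - a - 1 = i' + j' + 3 by omega,
    show a + (i'+2) + (j'+2) - a - (j'+2) = i' + 2 by omega,
    show (j'+2) - 2 = j' by omega, show (i'+2) - 2 = i' by omega,
    show (i'+2) + (j'+2) - 2 = i' + j' + 2 by omega]
  rw [show j' + 2 = (j'+1) + 1 by omega, Nat.factorial_succ (j'+1), Nat.factorial_succ j',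
    show i' + 2 = (i'+1) + 1 by omega, Nat.factorial_succ (i'+1), Nat.factorial_succ i',
    show i' + j' + 3 = (i'+j'+2)+1 by omega, Nat.factorial_succ (i'+j'+2)]
  push_cast
  have n1 := factorial_cast_ne (i'+j'+2)
  have n2 := factorial_cast_ne i'
  have n3 := factorial_cast_ne j'
  have h1 : ((i':ℂ)+j'+2) + 1 ≠ 0 := by
    have : ((i':ℂ)+j'+2) + 1 = ((i'+j'+3 : ℕ):ℂ) := by push_cast; ring
    rw [this]; exact Nat.cast_ne_zero.2 (by omega)
  field_simp
  ring

lemma keyE1 (n j a b : ℕ) (hj : 2 ≤ j) (hB : a + 1 + j = n) :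
    G n 1 a * ((1:ℂ)/((j-2).factorial : ℂ))
      = ((j:ℂ) - 1) * ((1:ℂ)/((1+j-2).factorial : ℂ)) := by
  obtain ⟨j', rfl⟩ : ∃ j', j = j' + 2 := ⟨j-2, by omega⟩
  subst hB
  unfold G
  rw [show a + 1 + (j'+2) - a - 1 = j' + 2 by omega,
    show (j'+2) - 2 = j' by omega, show 1 + (j'+2) - 2 = j' + 1 by omega]
  rw [div_self (factorial_cast_ne _), Nat.factorial_succ j']
  push_cast
  have n3 := factorial_cast_ne j'
  have h1 : ((j':ℂ)+1) ≠ 0 := by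
    have : ((j':ℂ)+1) = ((j'+1 : ℕ):ℂ) := by push_cast; ring
    rw [this]; exact Nat.cast_ne_zero.2 (by omega)
  field_simp
  ring

lemma key (n i j a b : ℕ) (hi : 1 ≤ i) (hin : i ≤ n) (hj : 1 ≤ j) (hjn : j ≤ n)
    (ha : a < n) (hb : b < n) :
    (if a+i+2 ≤ n then G n i a * Ent n j (a+i) b else 0)
      - (if a+j+2 ≤ n then G n j a * Ent n i (a+j) b else 0)
    = if i + j ≤ n then ((j:ℂ) - (i:ℂ)) * Ent n (i+j) a b else 0 := by
  by_cases hA : b = a + i + j ∧ a + i + j + 2 ≤ n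
  · rw [if_pos (show a+i+2 ≤ n by omega), if_pos (show a+j+2 ≤ n by omega),
      if_pos (show i+j ≤ n by omega)]
    have E1 : Ent n j (a+i) b = G n j (a+i) := by
      unfold Ent
      rw [if_pos (show b = (a+i)+j ∧ (a+i)+j+2 ≤ n by omega), if_neg (by omega), add_zero]
    have E2 : Ent n i (a+j) b = G n i (a+j) := by
      unfold Ent
      rw [if_pos (show b = (a+j)+i ∧ (a+j)+i+2 ≤ n by omega), if_neg (by omega), add_zero]
    have E3 : Ent n (i+j) a b = G n (i+j) a := by
      unfold Ent
      rw [if_pos (show b = a+(i+j) ∧ a+(i+j)+2 ≤ n by omega), if_neg (by omega), add_zero]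
    rw [E1, E2, E3]
    exact keyG n i j a hi hj (by omega)
  · by_cases hB : a + i + j = n ∧ b + 2 = n + 1
    · rw [if_pos (show i+j ≤ n by omega)]
      have E3 : Ent n (i+j) a b = (1:ℂ)/((i+j-2).factorial : ℂ) := by
        unfold Ent
        rw [if_neg (by omega), if_pos (show 2 ≤ i+j ∧ a+(i+j) = n ∧ b+2 = n+1 by omega),
          zero_add]
      have E1 : Ent n j (a+i) b = if 2 ≤ j then (1:ℂ)/((j-2).factorial : ℂ) else 0 := by
        unfold Ent
        rw [if_neg (by omega), zero_add]
        split_ifs with p q q <;> first | rfl | omega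
      have E2 : Ent n i (a+j) b = if 2 ≤ i then (1:ℂ)/((i-2).factorial : ℂ) else 0 := by
        unfold Ent
        rw [if_neg (by omega), zero_add]
        split_ifs with p q q <;> first | rfl | omega
      rw [E1, E2, E3]
      by_cases h2j : 2 ≤ j
      · by_cases h2i : 2 ≤ i
        · rw [if_pos (show a+i+2 ≤ n by omega), if_pos (show a+j+2 ≤ n by omega),
            if_pos h2j, if_pos h2i]
          exact keyE2 n i j a b h2i h2j hB.1
        · have hi1 : i = 1 := by omega
          subst hi1
          rw [if_pos (show a+1+2 ≤ n by omega), if_neg (show ¬(a+j+2 ≤ n) by omega),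
            if_pos h2j, sub_zero]
          have hk := keyE1 n j a b h2j hB.1
          push_cast at hk ⊢
          linear_combination hk
      · by_cases h2i : 2 ≤ i
        · have hj1 : j = 1 := by omega
          subst hj1
          rw [if_neg (show ¬(a+i+2 ≤ n) by omega), if_pos (show a+1+2 ≤ n by omega),
            if_pos h2i, zero_sub]
          rw [show i + 1 - 2 = 1 + i - 2 by omega]
          have hk := keyE1 n i a b h2i (by omega)
          push_cast at hk ⊢
          linear_combination -hk
        · have hi1 : i = 1 := by omega
          have hj1 : j = 1 := by omega
          subst hi1; subst hj1
          simp
    · have Z1 : Ent n j (a+i) b = 0 := by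
        unfold Ent
        rw [if_neg (by omega), if_neg (by omega), add_zero]
      have Z2 : Ent n i (a+j) b = 0 := by
        unfold Ent
        rw [if_neg (by omega), if_neg (by omega), add_zero]
      have Z3 : Ent n (i+j) a b = 0 := by
        unfold Ent
        rw [if_neg (by omega), if_neg (by omega), add_zero]
      rw [Z1, Z2, Z3, mul_zero, mul_zero, mul_zero, ite_self, ite_self, ite_self, sub_zero]

/-- The map `φ` sending `e_i` to `MW n i`, extended linearly, is an injective
Lie algebra homomorphism from the truncated Witt algebra `W_n` to `gl(n,ℂ)`. -/
theorem Wn_minimal_representation (n : ℕ) (hn : 5 ≤ n) :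
    (∀ i ∈ Finset.Icc 1 n, ∀ j ∈ Finset.Icc 1 n,
      ∑ k ∈ Finset.Icc 1 n, cW n i j k • MW n k
        = MW n i * MW n j - MW n j * MW n i) ∧
    Function.Injective
      (fun f : Fin n → ℂ => ∑ i : Fin n, f i • MW n ((i : ℕ) + 1)) := by
  constructor
  · intro i hi j hj
    rw [Finset.mem_Icc] at hi hj
    ext a b
    rw [Matrix.sub_apply, MW_mul_apply n i j (by omega) hi.1 hi.2 hj.1 hj.2,
      MW_mul_apply n j i (by omega) hj.1 hj.2 hi.1 hi.2, Matrix.sum_apply]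
    have hL : ∀ k ∈ Finset.Icc 1 n, (cW n i j k • MW n k) a b
        = if k = i+j
            then (if i+j ≤ n then ((j:ℂ)-(i:ℂ)) * Ent n (i+j) (a:ℕ) (b:ℕ) else 0)
            else 0 := by
      intro k hk
      rw [Finset.mem_Icc] at hk
      rw [Matrix.smul_apply, smul_eq_mul]
      unfold cW
      by_cases hk2 : k = i + j
      · subst hk2
        by_cases hle : i + j ≤ n
        · rw [if_pos ⟨hle, rfl⟩, if_pos rfl, if_pos hle,
            MW_apply n (i+j) (by omega) hle]
        · rw [if_neg (by tauto), zero_mul, if_pos rfl, if_neg hle]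
      · rw [if_neg (by tauto), zero_mul, if_neg hk2]
    rw [Finset.sum_congr rfl hL, Finset.sum_ite_eq' (Finset.Icc 1 n) (i+j)]
    have hcoll : (if i+j ∈ Finset.Icc 1 n
        then (if i+j ≤ n then ((j:ℂ)-(i:ℂ)) * Ent n (i+j) (a:ℕ) (b:ℕ) else 0) else 0)
        = if i+j ≤ n then ((j:ℂ)-(i:ℂ)) * Ent n (i+j) (a:ℕ) (b:ℕ) else 0 := by
      by_cases hle : i + j ≤ n
      · rw [if_pos (Finset.mem_Icc.2 ⟨by omega, hle⟩)]
      · rw [if_neg (fun hc => hle (Finset.mem_Icc.1 hc).2), if_neg hle]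
    rw [hcoll]
    exact (key n i j (a:ℕ) (b:ℕ) hi.1 hi.2 hj.1 hj.2 a.isLt b.isLt).symm
  · intro f g hfg
    have hfg' : (∑ x : Fin n, f x • MW n ((x:ℕ)+1))
        = ∑ x : Fin n, g x • MW n ((x:ℕ)+1) := hfg
    have hent : ∀ a b : Fin n,
        (∑ x : Fin n, f x • MW n ((x:ℕ)+1)) a b
          = (∑ x : Fin n, g x • MW n ((x:ℕ)+1)) a b := fun a b => by rw [hfg']
    have key2 : ∀ (h : Fin n → ℂ) (a b : Fin n),
        (∑ x : Fin n, h x • MW n ((x:ℕ)+1)) a b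
          = ∑ x : Fin n, h x * Ent n ((x:ℕ)+1) (a:ℕ) (b:ℕ) := by
      intro h a b
      rw [Matrix.sum_apply]
      apply Finset.sum_congr rfl
      intro m _
      rw [Matrix.smul_apply, smul_eq_mul,
        MW_apply n ((m:ℕ)+1) (by omega) (by have := m.isLt; omega)]
    funext x
    have hxlt := x.isLt
    by_cases hx : (x:ℕ) = 0
    · have a0 : (0:ℕ) < n := by omega
      have b1 : (1:ℕ) < n := by omega
      have h := hent ⟨0, a0⟩ ⟨1, b1⟩
      rw [key2, key2] at h
      simp only [Fin.val_mk] at h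
      have collapse : ∀ h0 : Fin n → ℂ,
          ∑ m : Fin n, h0 m * Ent n ((m:ℕ)+1) 0 1 = h0 x := by
        intro h0
        rw [Finset.sum_eq_single_of_mem x (Finset.mem_univ _)]
        · have hE : Ent n ((x:ℕ)+1) 0 1 = 1 := by
            rw [hx]
            unfold Ent G
            rw [if_pos (show (1:ℕ) = 0 + 1 ∧ 0 + 1 + 2 ≤ n by omega), if_neg (by omega),
              add_zero, div_self (factorial_cast_ne _)]
          rw [hE, mul_one]
        · intro m _ hm
          have hml : (m:ℕ) ≠ 0 := fun hc => hm (Fin.ext (by rw [hc, hx]))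
          have hz : Ent n ((m:ℕ)+1) 0 1 = 0 := by
            unfold Ent
            rw [if_neg (by omega), if_neg (by omega), add_zero]
          rw [hz, mul_zero]
      rw [collapse f, collapse g] at h
      exact h
    · have ha : n - 1 - (x:ℕ) < n := by omega
      have hbn : n - 1 < n := by omega
      have h := hent ⟨n - 1 - (x:ℕ), ha⟩ ⟨n-1, hbn⟩
      rw [key2, key2] at h
      simp only [Fin.val_mk] at h
      have collapse : ∀ h0 : Fin n → ℂ,
          ∑ m : Fin n, h0 m * Ent n ((m:ℕ)+1) (n-1-(x:ℕ)) (n-1)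
            = h0 x * ((1:ℂ)/(((x:ℕ)+1-2).factorial : ℂ)) := by
        intro h0
        rw [Finset.sum_eq_single_of_mem x (Finset.mem_univ _)]
        · congr 1
          unfold Ent
          rw [if_neg (by omega),
            if_pos (show 2 ≤ (x:ℕ)+1 ∧ (n-1-(x:ℕ))+((x:ℕ)+1) = n ∧ (n-1)+2 = n+1 by omega),
            zero_add]
        · intro m _ hm
          have hml : (m:ℕ) ≠ (x:ℕ) := fun hc => hm (Fin.ext hc)
          have hmlt := m.isLt
          have hz : Ent n ((m:ℕ)+1) (n-1-(x:ℕ)) (n-1) = 0 := by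
            unfold Ent
            rw [if_neg (by omega), if_neg (by omega), add_zero]
          rw [hz, mul_zero]
      rw [collapse f, collapse g] at h
      exact mul_right_cancel₀ (div_ne_zero one_ne_zero (factorial_cast_ne _)) h
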